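/- If n is a non-deficient positive integer with exactly k distinct prime factors and smallest prime factor p₁, then p₁ ≤ k. -/

import Mathlib

/-- `n` is non-deficient if `σ(n)/n ≥ 2`. -/
def NonDeficient (n : ℕ) : Prop := 2 * n ≤ ArithmeticFunction.sigma 1 n

/-- Key combinatorial lemma: distinct naturals all ≥ m ≥ 2 satisfy
`(m-1) * ∏ p ≤ (m + k - 1) * ∏ (p-1)` where `k` is the cardinality. -/
lemma aux_prod (k : ℕ) : ∀ (S : Finset ℕ) (m : ℕ), 2 ≤ m → (∀ p ∈ S, m ≤ p) →
    S.card = k → (m - 1) * ∏ p ∈ S, p ≤ (m + k - 1) * ∏ p ∈ S, (p - 1) := by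
  induction k with
  | zero =>
    intro S m hm hS hcard
    rw [Finset.card_eq_zero] at hcard
    subst hcard
    simp
  | succ k ih =>
    intro S m hm hS hcard
    have hne : S.Nonempty := Finset.card_pos.mp (by omega)
    obtain ⟨q, hqS, hqmin⟩ : ∃ q ∈ S, ∀ p ∈ S, q ≤ p :=
      ⟨S.min' hne, S.min'_mem hne, fun p hp => S.min'_le p hp⟩
    have hqm : m ≤ q := hS q hqS
    have hS' : ∀ p ∈ S.erase q, q + 1 ≤ p := by
      intro p hp
      have h1 := hqmin p (Finset.mem_of_mem_erase hp)
      have h2 := Finset.ne_of_mem_erase hp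
      omega
    have hcard' : (S.erase q).card = k := by
      rw [Finset.card_erase_of_mem hqS, hcard]
      omega
    have hih := ih (S.erase q) (q + 1) (by omega) hS' hcard'
    rw [← Finset.prod_erase_mul S _ hqS, ← Finset.prod_erase_mul S (fun p => p - 1) hqS]
    set A := ∏ p ∈ S.erase q, p with hA
    set B := ∏ p ∈ S.erase q, (p - 1) with hB
    have hih' : q * A ≤ (q + k) * B := by
      have e1 : q + 1 - 1 = q := by omega
      have e2 : q + 1 + k - 1 = q + k := by omega
      rwa [e1, e2] at hih
    obtain ⟨a, rfl⟩ : ∃ a, m = a + 1 := ⟨m - 1, by omega⟩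
    obtain ⟨b, rfl⟩ : ∃ b, q = b + 1 := ⟨q - 1, by omega⟩
    have e3 : a + 1 + (k + 1) - 1 = a + k + 1 := by omega
    have e4 : a + 1 - 1 = a := by omega
    rw [e3, e4]
    simp only [Nat.add_sub_cancel] at hih' ⊢
    -- goal : a * (A * (b+1)) ≤ (a+k+1) * (B * b)
    have hab : a ≤ b := by omega
    calc a * (A * (b + 1)) = a * ((b + 1) * A) := by ring
      _ ≤ a * ((b + 1 + k) * B) := by
          apply Nat.mul_le_mul_left
          simpa using hih'
      _ ≤ (a + k + 1) * (B * b) := by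
          have h5 : a * (b + 1 + k) ≤ (a + k + 1) * b := by nlinarith
          calc a * ((b + 1 + k) * B) = (a * (b + 1 + k)) * B := by ring
            _ ≤ ((a + k + 1) * b) * B := Nat.mul_le_mul_right B h5
            _ = (a + k + 1) * (B * b) := by ring
  
lemma aux_geom (p : ℕ) (hp : 2 ≤ p) : ∀ a : ℕ,
    (∑ i ∈ Finset.range (a + 1), p ^ i) * (p - 1) < p ^ (a + 1) := by
  intro a
  induction a with
  | zero =>
    simp only [Nat.zero_add, Finset.range_one, Finset.sum_singleton, pow_zero, one_mul, pow_one]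
    omega
  | succ a ih =>
    rw [Finset.sum_range_succ, Nat.add_mul]
    have h1 : p ^ (a + 1) * (p - 1) + p ^ (a + 1) = p ^ (a + 2) := by
      obtain ⟨q, rfl⟩ : ∃ q, p = q + 1 := ⟨p - 1, by omega⟩
      simp only [Nat.add_sub_cancel]
      ring
    have e : p ^ (a + 1 + 1) = p ^ (a + 2) := rfl
    omega

/-- σ(n) * ∏ (p-1) < n * ∏ p for n ≥ 2. -/
lemma aux_sigma (n : ℕ) (hn : 2 ≤ n) :
    ArithmeticFunction.sigma 1 n * ∏ p ∈ n.primeFactors, (p - 1) <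
    n * ∏ p ∈ n.primeFactors, p := by
  have hn0 : n ≠ 0 := by omega
  have hσ : ArithmeticFunction.sigma 1 n =
      ∏ p ∈ n.primeFactors, ∑ k ∈ Finset.range (n.factorization p + 1), p ^ k := by
    rw [ArithmeticFunction.sigma_one_apply, Nat.sum_divisors hn0]
  have hprod : n = ∏ p ∈ n.primeFactors, p ^ n.factorization p := by
    conv_lhs => rw [← Nat.factorization_prod_pow_eq_self hn0]
    rw [Nat.prod_factorization_eq_prod_primeFactors]
  rw [hσ, ← Finset.prod_mul_distrib]
  have goal2 : ∏ p ∈ n.primeFactors, (∑ k ∈ Finset.range (n.factorization p + 1), p ^ k) * (p - 1)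
      < ∏ p ∈ n.primeFactors, p ^ n.factorization p * p := by
    apply Finset.prod_lt_prod_of_nonempty
    · intro p hp
      have hp2 := (Nat.prime_of_mem_primeFactors hp).two_le
      have : 0 < ∑ k ∈ Finset.range (n.factorization p + 1), p ^ k := by
        apply Finset.sum_pos
        · intro i _
          exact pow_pos (by omega) _
        · exact Finset.nonempty_range_iff.mpr (by omega)
      exact Nat.mul_pos this (by omega)
    · intro p hp
      have hp2 := (Nat.prime_of_mem_primeFactors hp).two_le
      calc (∑ k ∈ Finset.range (n.factorization p + 1), p ^ k) * (p - 1)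
          < p ^ (n.factorization p + 1) := aux_geom p hp2 _
        _ = p ^ n.factorization p * p := by rw [pow_succ]
    · rw [Nat.nonempty_primeFactors]
      omega
  calc _ < ∏ p ∈ n.primeFactors, p ^ n.factorization p * p := goal2
    _ = n * ∏ p ∈ n.primeFactors, p := by rw [Finset.prod_mul_distrib, ← hprod]

theorem stmt_3 (n : ℕ) (hn : 0 < n) (hnd : NonDeficient n) :
    n.minFac ≤ n.primeFactors.card := by
  by_contra hlt
  push_neg at hlt
  have hn2 : 2 ≤ n := by
    rcases Nat.lt_or_ge n 2 with h | h
    · interval_cases n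
      simp [NonDeficient, ArithmeticFunction.sigma_one_apply] at hnd
    · exact h
  set k := n.primeFactors.card with hk
  have hk1 : 1 ≤ k := Finset.card_pos.mpr (Nat.nonempty_primeFactors.mpr hn2)
  have hmin : ∀ p ∈ n.primeFactors, k + 1 ≤ p := by
    intro p hp
    have hd : p ∣ n := Nat.dvd_of_mem_primeFactors hp
    have := Nat.minFac_le_of_dvd (Nat.prime_of_mem_primeFactors hp).two_le hd
    omega
  have hA := aux_prod k n.primeFactors (k + 1) (by omega) hmin rfl
  have e1 : k + 1 - 1 = k := by omega
  have e2 : k + 1 + k - 1 = 2 * k := by omega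
  rw [e1, e2] at hA
  -- hA : k * ∏ p ≤ 2k * ∏ (p-1)
  have hA' : ∏ p ∈ n.primeFactors, p ≤ 2 * ∏ p ∈ n.primeFactors, (p - 1) := by
    have := hA
    rw [show 2 * k = k * 2 by ring, mul_assoc] at this
    exact Nat.le_of_mul_le_mul_left this (by omega)
  have hB := aux_sigma n hn2
  have hnd' : 2 * n * ∏ p ∈ n.primeFactors, (p - 1) ≤
      ArithmeticFunction.sigma 1 n * ∏ p ∈ n.primeFactors, (p - 1) :=
    Nat.mul_le_mul_right _ hnd
  have hC : n * ∏ p ∈ n.primeFactors, p ≤ 2 * n * ∏ p ∈ n.primeFactors, (p - 1) := by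
    calc n * ∏ p ∈ n.primeFactors, p ≤ n * (2 * ∏ p ∈ n.primeFactors, (p - 1)) :=
          Nat.mul_le_mul_left _ hA'
      _ = 2 * n * ∏ p ∈ n.primeFactors, (p - 1) := by ring
  omega
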